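/- Let (X, ν) be a measure space, 1 < q < p < ∞, and let p′ = p/(p−1), q′ = q/(q−1) be the conjugate exponents. Let f : X → ℝ be measurable with ∫|f|ᵖ dν < ∞ and ∫|f|^q dν < ∞, and let X₁, X₂ : X → ℝ be measurable with ∫|X₁|^{p′} dν < ∞ and ∫|X₂|^{q′} dν < ∞. Then (1/p)∫|f|ᵖ dν + (1/q)∫|f|^q dν + (1/p′)∫|X₁|^{p′} dν + (1/q′)∫|X₂|^{q′} dν = ∫ f·(X₁ + X₂) dν if and only if ν-almost everywhere f·X₁ = |f|ᵖ = |X₁|^{p′} and f·X₂ = |f|^q = |X₂|^{q′}. -/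

import Mathlib

open MeasureTheory

/-- Strict two-point AM-GM inequality. -/
lemma amgm2_strict {x y w₁ w₂ : ℝ} (hx : 0 < x) (hy : 0 < y) (hxy : x ≠ y)
    (hw₁ : 0 < w₁) (hw₂ : 0 < w₂) (hw : w₁ + w₂ = 1) :
    x ^ w₁ * y ^ w₂ < w₁ * x + w₂ * y := by
  have h := strictConcaveOn_log_Ioi.2 (Set.mem_Ioi.2 hx) (Set.mem_Ioi.2 hy) hxy hw₁ hw₂ hw
  have hpos : 0 < w₁ * x + w₂ * y := by positivity
  have h2 : (0:ℝ) < x ^ w₁ * y ^ w₂ := by positivity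
  have h1 : Real.log (x ^ w₁ * y ^ w₂) = w₁ * Real.log x + w₂ * Real.log y := by
    rw [Real.log_mul (Real.rpow_pos_of_pos hx w₁).ne' (Real.rpow_pos_of_pos hy w₂).ne',
      Real.log_rpow hx, Real.log_rpow hy]
  have h3 := Real.exp_lt_exp.2 (by simpa [smul_eq_mul] using h)
  rwa [← h1, Real.exp_log h2, Real.exp_log hpos] at h3

/-- Equality case of Young's inequality for real numbers. -/
lemma young_eq_iff {p p' : ℝ} (hpq : p.HolderConjugate p') (a b : ℝ) :
    (1 / p) * |a| ^ p + (1 / p') * |b| ^ p' = a * b ↔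
      (a * b = |a| ^ p ∧ |a| ^ p = |b| ^ p') := by
  have hp0 : (0:ℝ) < p := hpq.pos
  have hp'0 : (0:ℝ) < p' := hpq.symm.pos
  have hsum : 1 / p + 1 / p' = 1 := by
    simpa [one_div] using hpq.inv_add_inv_eq_one
  have ht0 : 0 ≤ |a| ^ p := Real.rpow_nonneg (abs_nonneg a) p
  have hs0 : 0 ≤ |b| ^ p' := Real.rpow_nonneg (abs_nonneg b) p'
  constructor
  · intro h
    set t := |a| ^ p with ht
    set s := |b| ^ p' with hs
    have hyoung := Real.young_inequality_of_nonneg (abs_nonneg a) (abs_nonneg b) hpq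
    have habs : a * b ≤ |a| * |b| := (le_abs_self _).trans_eq (abs_mul a b)
    have hform : (1 / p) * t + (1 / p') * s = t / p + s / p' := by ring
    have eq2 : |a| * |b| = (1 / p) * t + (1 / p') * s := by
      have h1 : |a| * |b| ≤ (1 / p) * t + (1 / p') * s := by rw [hform]; exact hyoung
      linarith [h.le, h.ge]
    -- t = s
    have hts : t = s := by
      by_contra hne
      have ha0 : a ≠ 0 := by
        rintro rfl
        have ht' : t = 0 := by
          simp [ht, Real.zero_rpow hp0.ne']
        have hs' : (1 / p') * s = 0 := by
          simpa [ht', abs_mul] using eq2.symm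
        have : s = 0 := by
          rcases mul_eq_zero.1 hs' with h' | h'
          · exact absurd h' (by positivity)
          · exact h'
        exact hne (ht'.trans this.symm)
      have hb0 : b ≠ 0 := by
        rintro rfl
        have hs' : s = 0 := by
          simp [hs, Real.zero_rpow hp'0.ne']
        have ht' : (1 / p) * t = 0 := by
          simpa [hs', abs_mul] using eq2.symm
        have : t = 0 := by
          rcases mul_eq_zero.1 ht' with h' | h'
          · exact absurd h' (by positivity)
          · exact h'
        exact hne (this.trans hs'.symm)
      have hta : 0 < t := Real.rpow_pos_of_pos (abs_pos.2 ha0) p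
      have hsa : 0 < s := Real.rpow_pos_of_pos (abs_pos.2 hb0) p'
      have hstrict := amgm2_strict hta hsa hne (by positivity : (0:ℝ) < 1/p)
        (by positivity : (0:ℝ) < 1/p') hsum
      have hta' : t ^ (1/p) = |a| := by
        rw [ht, ← Real.rpow_mul (abs_nonneg a), mul_one_div_cancel hp0.ne',
          Real.rpow_one]
      have hsa' : s ^ (1/p') = |b| := by
        rw [hs, ← Real.rpow_mul (abs_nonneg b), mul_one_div_cancel hp'0.ne',
          Real.rpow_one]
      rw [hta', hsa'] at hstrict
      linarith [eq2, hstrict]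
    -- |a|*|b| = t
    have habt : |a| * |b| = t := by
      rcases eq_or_lt_of_le ht0 with h0 | h0
      · have ha' : |a| = 0 := by
          have h0' : |a| ^ p = 0 := h0.symm
          rcases (Real.rpow_eq_zero_iff_of_nonneg (abs_nonneg a)).1 h0' with ⟨h1, _⟩
          exact h1
        simp [ha', ← h0]
      · have hta' : t ^ (1/p) = |a| := by
          rw [ht, ← Real.rpow_mul (abs_nonneg a), mul_one_div_cancel hp0.ne',
            Real.rpow_one]
        have hsa' : s ^ (1/p') = |b| := by
          rw [hs, ← Real.rpow_mul (abs_nonneg b), mul_one_div_cancel hp'0.ne',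
            Real.rpow_one]
        calc |a| * |b| = t ^ (1/p) * s ^ (1/p') := by rw [hta', hsa']
          _ = t ^ (1/p) * t ^ (1/p') := by rw [← hts]
          _ = t ^ (1/p + 1/p') := (Real.rpow_add h0 _ _).symm
          _ = t := by rw [hsum, Real.rpow_one]
    have hab : a * b = t := by
      have h1 : (1/p) * t + (1/p') * s = t := by
        rw [← hts]; linear_combination t * hsum
      linarith [h, h1]
    exact ⟨hab, hts⟩
  · rintro ⟨hab, hts⟩
    rw [← hts, ← hab]
    linear_combination (a * b) * hsum

/-- Scalar content of the characterisation of the subdifferential of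
`E_{(q,p)}(v) = ∫((1/p)|v|^p + (1/q)|v|^q)`: the Fenchel equality holds iff the two
Young inequalities are pointwise equalities a.e. -/
theorem stmt_13 {X : Type*} [MeasurableSpace X] (ν : Measure X)
    (p q p' q' : ℝ) (hq : 1 < q) (hqp : q < p)
    (hp' : p' = p / (p - 1)) (hq' : q' = q / (q - 1))
    (f X₁ X₂ : X → ℝ) (hf : Measurable f) (hX₁ : Measurable X₁) (hX₂ : Measurable X₂)
    (hfp : Integrable (fun x => |f x| ^ p) ν)
    (hfq : Integrable (fun x => |f x| ^ q) ν)
    (hX₁p : Integrable (fun x => |X₁ x| ^ p') ν)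
    (hX₂q : Integrable (fun x => |X₂ x| ^ q') ν) :
    ((1 / p) * (∫ x, |f x| ^ p ∂ν) + (1 / q) * (∫ x, |f x| ^ q ∂ν)
        + (1 / p') * (∫ x, |X₁ x| ^ p' ∂ν) + (1 / q') * (∫ x, |X₂ x| ^ q' ∂ν)
        = ∫ x, f x * (X₁ x + X₂ x) ∂ν)
      ↔ ∀ᵐ x ∂ν, (f x * X₁ x = |f x| ^ p ∧ |f x| ^ p = |X₁ x| ^ p') ∧
          (f x * X₂ x = |f x| ^ q ∧ |f x| ^ q = |X₂ x| ^ q') := by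
  have hp : 1 < p := hq.trans hqp
  have hpc : p.HolderConjugate p' := (Real.holderConjugate_iff_eq_conjExponent hp).2 hp'
  have hqc : q.HolderConjugate q' := (Real.holderConjugate_iff_eq_conjExponent hq).2 hq'
  -- integrability of products
  have hprod : ∀ (r r' : ℝ) (_ : r.HolderConjugate r') (u v : X → ℝ),
      Measurable u → Measurable v → Integrable (fun x => |u x| ^ r) ν →
      Integrable (fun x => |v x| ^ r') ν → Integrable (fun x => u x * v x) ν := by
    intro r r' hrc u v hu hv hur hvr
    apply Integrable.mono' (hur.add hvr) ((hu.mul hv).aestronglyMeasurable)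
    filter_upwards with x
    calc |u x * v x| = |u x| * |v x| := abs_mul _ _
      _ ≤ |u x| ^ r / r + |v x| ^ r' / r' :=
          Real.young_inequality_of_nonneg (abs_nonneg _) (abs_nonneg _) hrc
      _ ≤ |u x| ^ r + |v x| ^ r' :=
          add_le_add (div_le_self (Real.rpow_nonneg (abs_nonneg _) _) hrc.lt.le)
            (div_le_self (Real.rpow_nonneg (abs_nonneg _) _) hrc.symm.lt.le)
  have hint₁ : Integrable (fun x => f x * X₁ x) ν := hprod p p' hpc f X₁ hf hX₁ hfp hX₁p
  have hint₂ : Integrable (fun x => f x * X₂ x) ν := hprod q q' hqc f X₂ hf hX₂ hfq hX₂q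
  -- pointwise Young gaps
  have hgap₁ : ∀ x, 0 ≤ (1 / p) * |f x| ^ p + (1 / p') * |X₁ x| ^ p' - f x * X₁ x := by
    intro x
    have h1 := Real.young_inequality (f x) (X₁ x) hpc
    have e1 : |f x| ^ p / p + |X₁ x| ^ p' / p'
        = (1 / p) * |f x| ^ p + (1 / p') * |X₁ x| ^ p' := by ring
    linarith
  have hgap₂ : ∀ x, 0 ≤ (1 / q) * |f x| ^ q + (1 / q') * |X₂ x| ^ q' - f x * X₂ x := by
    intro x
    have h1 := Real.young_inequality (f x) (X₂ x) hqc
    have e1 : |f x| ^ q / q + |X₂ x| ^ q' / q'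
        = (1 / q) * |f x| ^ q + (1 / q') * |X₂ x| ^ q' := by ring
    linarith
  -- the nonnegative gap function
  set G : X → ℝ := fun x =>
    ((1 / p) * |f x| ^ p + (1 / p') * |X₁ x| ^ p' - f x * X₁ x) +
    ((1 / q) * |f x| ^ q + (1 / q') * |X₂ x| ^ q' - f x * X₂ x) with hGdef
  have hGnn : ∀ x, 0 ≤ G x := fun x => add_nonneg (hgap₁ x) (hgap₂ x)
  have i₁ : Integrable (fun x => (1 / p) * |f x| ^ p + (1 / p') * |X₁ x| ^ p'
      - f x * X₁ x) ν := by
    exact ((hfp.const_mul _).add (hX₁p.const_mul _)).sub hint₁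
  have i₂ : Integrable (fun x => (1 / q) * |f x| ^ q + (1 / q') * |X₂ x| ^ q'
      - f x * X₂ x) ν := by
    exact ((hfq.const_mul _).add (hX₂q.const_mul _)).sub hint₂
  have hGint : Integrable G ν := by exact i₁.add i₂
  have hGint_eq : ∫ x, G x ∂ν =
      ((1 / p) * (∫ x, |f x| ^ p ∂ν) + (1 / q) * (∫ x, |f x| ^ q ∂ν)
        + (1 / p') * (∫ x, |X₁ x| ^ p' ∂ν) + (1 / q') * (∫ x, |X₂ x| ^ q' ∂ν))
      - ∫ x, f x * (X₁ x + X₂ x) ∂ν := by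
    have hrhs : ∫ x, f x * (X₁ x + X₂ x) ∂ν
        = (∫ x, f x * X₁ x ∂ν) + ∫ x, f x * X₂ x ∂ν := by
      rw [← integral_add hint₁ hint₂]
      simp only [mul_add]
    have j₁ : Integrable (fun x => (1 / p) * |f x| ^ p) ν := by exact hfp.const_mul _
    have j₂ : Integrable (fun x => (1 / p') * |X₁ x| ^ p') ν := by exact hX₁p.const_mul _
    have j₃ : Integrable (fun x => (1 / q) * |f x| ^ q) ν := by exact hfq.const_mul _
    have j₄ : Integrable (fun x => (1 / q') * |X₂ x| ^ q') ν := by exact hX₂q.const_mul _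
    have j₁₂ : Integrable (fun x => (1 / p) * |f x| ^ p + (1 / p') * |X₁ x| ^ p') ν := by
      exact j₁.add j₂
    have j₃₄ : Integrable (fun x => (1 / q) * |f x| ^ q + (1 / q') * |X₂ x| ^ q') ν := by
      exact j₃.add j₄
    have e₁ : ∫ x, ((1 / p) * |f x| ^ p + (1 / p') * |X₁ x| ^ p' - f x * X₁ x) ∂ν
        = (1 / p) * (∫ x, |f x| ^ p ∂ν) + (1 / p') * (∫ x, |X₁ x| ^ p' ∂ν)
          - ∫ x, f x * X₁ x ∂ν := by
      rw [integral_sub j₁₂ hint₁, integral_add j₁ j₂,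
        integral_const_mul, integral_const_mul]
    have e₂ : ∫ x, ((1 / q) * |f x| ^ q + (1 / q') * |X₂ x| ^ q' - f x * X₂ x) ∂ν
        = (1 / q) * (∫ x, |f x| ^ q ∂ν) + (1 / q') * (∫ x, |X₂ x| ^ q' ∂ν)
          - ∫ x, f x * X₂ x ∂ν := by
      rw [integral_sub j₃₄ hint₂, integral_add j₃ j₄,
        integral_const_mul, integral_const_mul]
    have e₀ : ∫ x, G x ∂ν
        = (∫ x, ((1 / p) * |f x| ^ p + (1 / p') * |X₁ x| ^ p' - f x * X₁ x) ∂ν)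
          + ∫ x, ((1 / q) * |f x| ^ q + (1 / q') * |X₂ x| ^ q' - f x * X₂ x) ∂ν := by
      rw [hGdef]; exact integral_add i₁ i₂
    rw [e₀, e₁, e₂, hrhs]; ring
  have key : ((1 / p) * (∫ x, |f x| ^ p ∂ν) + (1 / q) * (∫ x, |f x| ^ q ∂ν)
        + (1 / p') * (∫ x, |X₁ x| ^ p' ∂ν) + (1 / q') * (∫ x, |X₂ x| ^ q' ∂ν)
        = ∫ x, f x * (X₁ x + X₂ x) ∂ν) ↔ ∫ x, G x ∂ν = 0 := by
    rw [hGint_eq, sub_eq_zero, eq_comm]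
  rw [key, integral_eq_zero_iff_of_nonneg hGnn hGint]
  apply Filter.eventually_congr
  filter_upwards with x
  show G x = (0 : X → ℝ) x ↔ _
  rw [Pi.zero_apply]
  have h1 : G x = 0 ↔
      (((1 / p) * |f x| ^ p + (1 / p') * |X₁ x| ^ p' - f x * X₁ x) = 0 ∧
       ((1 / q) * |f x| ^ q + (1 / q') * |X₂ x| ^ q' - f x * X₂ x) = 0) := by
    simp only [hGdef]
    constructor
    · intro h
      exact ⟨by linarith [hgap₁ x, hgap₂ x], by linarith [hgap₁ x, hgap₂ x]⟩
    · rintro ⟨ha, hb⟩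
      rw [ha, hb, add_zero]
  rw [h1, sub_eq_zero, sub_eq_zero,
    young_eq_iff hpc (f x) (X₁ x), young_eq_iff hqc (f x) (X₂ x)]
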